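/- arXiv:2107.03003 — 5 statements merged into one kernel-verified Lean document; each statement's English description precedes it below -/
import Mathlib

section
/- Let J ≥ 1, let B_1, …, B_J be positive definite real T×T matrices and z_1, …, z_J ∈ ℝ^T. Then (∑_{l=1}^J z_l)ᵀ (∑_{l=1}^J B_l)⁻¹ (∑_{l=1}^J z_l) ≤ ∑_{l=1}^J z_lᵀ B_l⁻¹ z_l. (This is the core inequality behind Theorem 'reduced variance': the double sum ∑_{i,j} z_iᵀ(∑_l B_l)⁻¹ z_j equals the left-hand side.) -/
open Matrix BigOperators

private lemma sum_mulVec' {T J : ℕ} (M : Fin J → Matrix (Fin T) (Fin T) ℝ)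
    (v : Fin T → ℝ) : (∑ l, M l) *ᵥ v = ∑ l, M l *ᵥ v := by
  ext i
  simp only [Matrix.mulVec, dotProduct, Finset.sum_apply, Matrix.sum_apply,
    Finset.sum_mul]
  rw [Finset.sum_comm]

private lemma dotProduct_sum' {T J : ℕ} (u : Fin T → ℝ) (w : Fin J → (Fin T → ℝ)) :
    u ⬝ᵥ (∑ l, w l) = ∑ l, u ⬝ᵥ w l := by
  simp only [dotProduct, Finset.sum_apply, Finset.mul_sum]
  rw [Finset.sum_comm]

/-- Core Jensen-type inequality behind the reduced-variance theorem:
for positive definite matrices `B l` and vectors `z l`,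
`(∑ z)ᵀ (∑ B)⁻¹ (∑ z) ≤ ∑ zᵀ B⁻¹ z`. -/
theorem sum_quadratic_form_inv_le {T J : ℕ} (hJ : 1 ≤ J)
    (B : Fin J → Matrix (Fin T) (Fin T) ℝ) (hB : ∀ l, (B l).PosDef)
    (z : Fin J → (Fin T → ℝ)) :
    (∑ l, z l) ⬝ᵥ ((∑ l, B l)⁻¹ *ᵥ (∑ l, z l)) ≤
      ∑ l, z l ⬝ᵥ ((B l)⁻¹ *ᵥ z l) := by
  have hJne : Nonempty (Fin J) := ⟨⟨0, hJ⟩⟩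
  set S : Matrix (Fin T) (Fin T) ℝ := ∑ l, B l with hSdef
  have hS : S.PosDef := by
    refine Matrix.PosDef.of_dotProduct_mulVec_pos ?_ ?_
    · unfold Matrix.IsHermitian
      simp only [hSdef, conjTranspose_sum]
      exact Finset.sum_congr rfl fun l _ => (hB l).1
    · intro v hv
      have : (star v) ⬝ᵥ (S *ᵥ v) = ∑ l, (star v) ⬝ᵥ (B l *ᵥ v) := by
        rw [hSdef, sum_mulVec', dotProduct_sum']
      rw [this]
      exact Finset.sum_pos (fun l _ => (hB l).dotProduct_mulVec_pos hv) Finset.univ_nonempty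
  set s : Fin T → ℝ := ∑ l, z l with hsdef
  set y : Fin T → ℝ := S⁻¹ *ᵥ s with hydef
  set x : Fin J → (Fin T → ℝ) := fun l => (B l)⁻¹ *ᵥ z l with hxdef
  have hBx : ∀ l, B l *ᵥ x l = z l := fun l => by
    show B l *ᵥ ((B l)⁻¹ *ᵥ z l) = z l
    rw [mulVec_mulVec, Matrix.mul_nonsing_inv _ (hB l).det_pos.ne'.isUnit, one_mulVec]
  have hSy : S *ᵥ y = s := by
    rw [hydef, mulVec_mulVec, Matrix.mul_nonsing_inv _ hS.det_pos.ne'.isUnit, one_mulVec]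
  have hsym : ∀ (M : Matrix (Fin T) (Fin T) ℝ), M.IsHermitian →
      ∀ u v : Fin T → ℝ, u ⬝ᵥ (M *ᵥ v) = v ⬝ᵥ (M *ᵥ u) := by
    intro M hM u v
    have hMt : Mᵀ = M := by
      have := hM; unfold Matrix.IsHermitian at this
      simpa using this
    rw [dotProduct_mulVec, ← mulVec_transpose, hMt, dotProduct_comm]
  have key : ∀ l, 2 * (y ⬝ᵥ z l) ≤ x l ⬝ᵥ z l + y ⬝ᵥ (B l *ᵥ y) := by
    intro l
    have h0 : 0 ≤ (x l - y) ⬝ᵥ (B l *ᵥ (x l - y)) := by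
      have := (hB l).posSemidef.dotProduct_mulVec_nonneg (x l - y)
      simpa using this
    have hxy : x l ⬝ᵥ (B l *ᵥ y) = y ⬝ᵥ (B l *ᵥ x l) := hsym (B l) (hB l).1 (x l) y
    have hexp : (x l - y) ⬝ᵥ (B l *ᵥ (x l - y)) =
        x l ⬝ᵥ (B l *ᵥ x l) - 2 * (y ⬝ᵥ (B l *ᵥ x l)) + y ⬝ᵥ (B l *ᵥ y) := by
      simp only [mulVec_sub, sub_dotProduct, dotProduct_sub]
      rw [hxy]; ring
    rw [hexp, hBx l] at h0
    have hxx : x l ⬝ᵥ (B l *ᵥ x l) = x l ⬝ᵥ z l := by rw [hBx l]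
    nlinarith [h0, hxx]
  have h1 : y ⬝ᵥ s = ∑ l, y ⬝ᵥ z l := by
    rw [hsdef, dotProduct_sum']
  have h2 : y ⬝ᵥ s = ∑ l, y ⬝ᵥ (B l *ᵥ y) := by
    conv_lhs => rw [← hSy]
    rw [hSdef, sum_mulVec', dotProduct_sum']
  have hsum : 2 * (y ⬝ᵥ s) ≤ (∑ l, x l ⬝ᵥ z l) + y ⬝ᵥ s := by
    calc 2 * (y ⬝ᵥ s) = ∑ l, 2 * (y ⬝ᵥ z l) := by rw [h1, Finset.mul_sum]
      _ ≤ ∑ l, (x l ⬝ᵥ z l + y ⬝ᵥ (B l *ᵥ y)) :=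
          Finset.sum_le_sum fun l _ => key l
      _ = (∑ l, x l ⬝ᵥ z l) + y ⬝ᵥ s := by rw [Finset.sum_add_distrib, ← h2]
  have hfin : y ⬝ᵥ s ≤ ∑ l, x l ⬝ᵥ z l := by linarith
  have hLHS : s ⬝ᵥ (S⁻¹ *ᵥ s) = y ⬝ᵥ s := dotProduct_comm _ _
  have hRHS : ∀ l, z l ⬝ᵥ ((B l)⁻¹ *ᵥ z l) = x l ⬝ᵥ z l := fun l =>
    dotProduct_comm _ _
  calc s ⬝ᵥ (S⁻¹ *ᵥ s) = y ⬝ᵥ s := hLHS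
    _ ≤ ∑ l, x l ⬝ᵥ z l := hfin
    _ = ∑ l, z l ⬝ᵥ ((B l)⁻¹ *ᵥ z l) :=
        Finset.sum_congr rfl fun l _ => (hRHS l).symm
end

section
/- (Theorem: decomposed GP regression has smaller variance.) With the decomposed-kernel setup, suppose each K_{j,T} is symmetric positive definite and each D_j is invertible (i.e. g_j(x_t) ≠ 0 for all t, j). Then the variance of decomposed GP regression is at most the variance of standard GP regression with the composed kernel: σ²_{T,decomp}(x) = ∑_{j=1}^J g_j(x)² (k_j(x,x) − k_{j,T}(x)ᵀ K_{j,T}⁻¹ k_{j,T}(x)) ≤ k(x,x) − k_T(x)ᵀ K_T⁻¹ k_T(x) = σ²_{T,entire}(x). -/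
open Matrix BigOperators

/-- The noisy kernel matrix `K_{j,T}` of the `j`-th decomposed component. -/
noncomputable def Kmat {X : Type*} {T J : ℕ} (kj : Fin J → X → X → ℝ)
    (sj : Fin J → X → ℝ) (xs : Fin T → X) (j : Fin J) : Matrix (Fin T) (Fin T) ℝ :=
  Matrix.of (fun s t => kj j (xs s) (xs t)) + Matrix.diagonal (fun t => sj j (xs t))

/-- The diagonal weight matrix `D_j = diag(g_j(x_1), …, g_j(x_T))`. -/
noncomputable def Dmat {X : Type*} {T J : ℕ} (gj : Fin J → X → ℝ)
    (xs : Fin T → X) (j : Fin J) : Matrix (Fin T) (Fin T) ℝ :=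
  Matrix.diagonal (fun t => gj j (xs t))

/-- The composed kernel `k(x,x') = ∑ j, g_j(x) k_j(x,x') g_j(x')`. -/
noncomputable def kComp {X : Type*} {J : ℕ} (kj : Fin J → X → X → ℝ)
    (gj : Fin J → X → ℝ) (x x' : X) : ℝ :=
  ∑ j, gj j x * kj j x x' * gj j x'

/-- The composed noise variance `σ²(x) = ∑ j, g_j(x)² σ_j²(x)`. -/
noncomputable def sComp {X : Type*} {J : ℕ} (gj : Fin J → X → ℝ)
    (sj : Fin J → X → ℝ) (x : X) : ℝ :=
  ∑ j, (gj j x) ^ 2 * sj j x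

/-- The composed noisy kernel matrix `K_T`. -/
noncomputable def KmatComp {X : Type*} {T J : ℕ} (kj : Fin J → X → X → ℝ)
    (gj : Fin J → X → ℝ) (sj : Fin J → X → ℝ) (xs : Fin T → X) :
    Matrix (Fin T) (Fin T) ℝ :=
  Matrix.of (fun s t => kComp kj gj (xs s) (xs t)) +
    Matrix.diagonal (fun t => sComp gj sj (xs t))

/-- The vector `k_{j,T}(x) = (k_j(x_1,x), …, k_j(x_T,x))ᵀ`. -/
def kvec {X : Type*} {T J : ℕ} (kj : Fin J → X → X → ℝ) (xs : Fin T → X)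
    (j : Fin J) (x : X) : Fin T → ℝ :=
  fun t => kj j (xs t) x

/-- The vector `k_T(x) = (k(x_1,x), …, k(x_T,x))ᵀ` of the composed kernel. -/
noncomputable def kvecComp {X : Type*} {T J : ℕ} (kj : Fin J → X → X → ℝ)
    (gj : Fin J → X → ℝ) (xs : Fin T → X) (x : X) : Fin T → ℝ :=
  fun t => kComp kj gj (xs t) x

/-- The vector `z_j = g_j(x) · D_j k_{j,T}(x)`. -/
noncomputable def zvec {X : Type*} {T J : ℕ} (kj : Fin J → X → X → ℝ)
    (gj : Fin J → X → ℝ) (xs : Fin T → X) (j : Fin J) (x : X) : Fin T → ℝ :=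
  gj j x • (Dmat gj xs j *ᵥ kvec kj xs j x)

lemma quad_lower {n : ℕ} {A : Matrix (Fin n) (Fin n) ℝ} (hA : A.PosDef)
    (z w : Fin n → ℝ) :
    2 * (w ⬝ᵥ z) - w ⬝ᵥ (A *ᵥ w) ≤ z ⬝ᵥ (A⁻¹ *ᵥ z) := by
  have hinv : A * A⁻¹ = 1 := Matrix.mul_nonsing_inv _ hA.det_pos.ne'.isUnit
  have hsymA : ∀ v u : Fin n → ℝ, v ⬝ᵥ (A *ᵥ u) = (A *ᵥ v) ⬝ᵥ u := by
    intro v u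
    rw [Matrix.dotProduct_mulVec, ← Matrix.mulVec_transpose]
    rw [← Matrix.conjTranspose_eq_transpose_of_trivial, hA.isHermitian.eq]
  have h0 : (0:ℝ) ≤ (A⁻¹ *ᵥ z - w) ⬝ᵥ (A *ᵥ (A⁻¹ *ᵥ z - w)) := by
    have := hA.posSemidef.dotProduct_mulVec_nonneg (A⁻¹ *ᵥ z - w)
    simpa using this
  have hAz : A *ᵥ (A⁻¹ *ᵥ z) = z := by
    rw [Matrix.mulVec_mulVec, hinv, Matrix.one_mulVec]
  rw [Matrix.mulVec_sub, hAz, sub_dotProduct, dotProduct_sub,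
    dotProduct_sub] at h0
  have h1 : (A⁻¹ *ᵥ z) ⬝ᵥ (A *ᵥ w) = z ⬝ᵥ w := by
    rw [hsymA, hAz]
  have h2 : (A⁻¹ *ᵥ z) ⬝ᵥ z = z ⬝ᵥ (A⁻¹ *ᵥ z) := dotProduct_comm _ _
  have h3 : w ⬝ᵥ z = z ⬝ᵥ w := dotProduct_comm _ _
  linarith

lemma sum_mulVec'_s4 {n J : ℕ} (A : Fin J → Matrix (Fin n) (Fin n) ℝ) (x : Fin n → ℝ) :
    (∑ j, A j) *ᵥ x = ∑ j, A j *ᵥ x := by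
  ext i
  simp [Matrix.mulVec, dotProduct, Finset.sum_mul, Matrix.sum_apply]
  rw [Finset.sum_comm]

lemma dotProduct_sum'_s4 {n J : ℕ} (v : Fin n → ℝ) (z : Fin J → Fin n → ℝ) :
    v ⬝ᵥ (∑ j, z j) = ∑ j, v ⬝ᵥ z j := by
  simp [dotProduct, Finset.mul_sum, Finset.sum_apply]
  rw [Finset.sum_comm]

lemma posDef_sum {n J : ℕ} (hJ : J ≠ 0) (A : Fin J → Matrix (Fin n) (Fin n) ℝ)
    (hA : ∀ j, (A j).PosDef) : (∑ j, A j).PosDef := by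
  refine Matrix.PosDef.of_dotProduct_mulVec_pos ?_ ?_
  · unfold Matrix.IsHermitian
    rw [Matrix.conjTranspose_sum]
    exact Finset.sum_congr rfl fun j _ => (hA j).isHermitian.eq
  · intro x hx
    have : (∑ j, A j) *ᵥ x = ∑ j, A j *ᵥ x := by
      exact sum_mulVec'_s4 A x
    rw [this, dotProduct_sum'_s4]
    refine Finset.sum_pos (fun j _ => ?_) ?_
    · have := (hA j).dotProduct_mulVec_pos hx
      simpa using this
    · simpa using Finset.univ_nonempty_iff.mpr (Fin.pos_iff_nonempty.mp (Nat.pos_of_ne_zero hJ))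

lemma sum_quad_le {n J : ℕ} (hJ : J ≠ 0) (A : Fin J → Matrix (Fin n) (Fin n) ℝ)
    (z : Fin J → Fin n → ℝ) (hA : ∀ j, (A j).PosDef) :
    (∑ j, z j) ⬝ᵥ ((∑ j, A j)⁻¹ *ᵥ (∑ j, z j)) ≤ ∑ j, z j ⬝ᵥ ((A j)⁻¹ *ᵥ z j) := by
  have hS : (∑ j, A j).PosDef := posDef_sum hJ A hA
  set S := ∑ j, A j with hSdef
  set w := S⁻¹ *ᵥ (∑ j, z j) with hw
  have hSw : S *ᵥ w = ∑ j, z j := by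
    rw [hw, Matrix.mulVec_mulVec, Matrix.mul_nonsing_inv _ hS.det_pos.ne'.isUnit,
      Matrix.one_mulVec]
  have key : (∑ j, z j) ⬝ᵥ w = ∑ j, (2 * (w ⬝ᵥ z j) - w ⬝ᵥ (A j *ᵥ w)) := by
    have h1 : w ⬝ᵥ (S *ᵥ w) = ∑ j, w ⬝ᵥ (A j *ᵥ w) := by
      rw [hSdef, sum_mulVec'_s4, dotProduct_sum'_s4]
    have h2 : w ⬝ᵥ ∑ j, z j = ∑ j, w ⬝ᵥ z j := dotProduct_sum'_s4 _ _
    rw [Finset.sum_sub_distrib, ← h1, hSw, ← Finset.mul_sum, ← h2,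
      dotProduct_comm]
    ring
  calc (∑ j, z j) ⬝ᵥ (S⁻¹ *ᵥ (∑ j, z j)) = ∑ j, (2 * (w ⬝ᵥ z j) - w ⬝ᵥ (A j *ᵥ w)) := key
    _ ≤ ∑ j, z j ⬝ᵥ ((A j)⁻¹ *ᵥ z j) := Finset.sum_le_sum fun j _ => quad_lower (hA j) _ _

lemma dot_diag_left {n : ℕ} (d : Fin n → ℝ) (x u : Fin n → ℝ) :
    x ⬝ᵥ (Matrix.diagonal d *ᵥ u) = (Matrix.diagonal d *ᵥ x) ⬝ᵥ u := by
  simp only [dotProduct, Matrix.mulVec_diagonal]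
  exact Finset.sum_congr rfl fun i _ => by ring

lemma diag_mulVec_ne_zero {n : ℕ} {d : Fin n → ℝ} (hd : ∀ i, d i ≠ 0)
    {x : Fin n → ℝ} (hx : x ≠ 0) : Matrix.diagonal d *ᵥ x ≠ 0 := by
  intro h
  apply hx
  funext i
  have := congrFun h i
  simp only [Matrix.mulVec_diagonal, Pi.zero_apply] at this
  exact (mul_eq_zero.mp this).resolve_left (hd i)

lemma DKD_posDef {n : ℕ} {K : Matrix (Fin n) (Fin n) ℝ} (hK : K.PosDef)
    {d : Fin n → ℝ} (hd : ∀ i, d i ≠ 0) :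
    (Matrix.diagonal d * K * Matrix.diagonal d).PosDef := by
  refine Matrix.PosDef.of_dotProduct_mulVec_pos ?_ ?_
  · unfold Matrix.IsHermitian
    rw [Matrix.conjTranspose_mul, Matrix.conjTranspose_mul, hK.isHermitian.eq]
    have hDh : (Matrix.diagonal d)ᴴ = Matrix.diagonal d := by
      simp [Matrix.diagonal_conjTranspose]
    rw [hDh, Matrix.mul_assoc]
  · intro x hx
    have hy := diag_mulVec_ne_zero hd hx
    have hpos := hK.dotProduct_mulVec_pos hy
    simp only [star_trivial] at hpos ⊢
    rw [← Matrix.mulVec_mulVec, ← Matrix.mulVec_mulVec, dot_diag_left]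
    exact hpos

lemma DKD_inv_dot {n : ℕ} {K : Matrix (Fin n) (Fin n) ℝ}
    {d : Fin n → ℝ} (hd : ∀ i, d i ≠ 0) (k : Fin n → ℝ) :
    (Matrix.diagonal d *ᵥ k) ⬝ᵥ
      ((Matrix.diagonal d * K * Matrix.diagonal d)⁻¹ *ᵥ (Matrix.diagonal d *ᵥ k))
      = k ⬝ᵥ (K⁻¹ *ᵥ k) := by
  have hDinv : (Matrix.diagonal d)⁻¹ = Matrix.diagonal (fun i => (d i)⁻¹) := by
    apply Matrix.inv_eq_right_inv
    rw [Matrix.diagonal_mul_diagonal]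
    convert Matrix.diagonal_one using 2
    exact funext fun i => mul_inv_cancel₀ (hd i)
  have h1 : Matrix.diagonal (fun i => (d i)⁻¹) *ᵥ (Matrix.diagonal d *ᵥ k) = k := by
    funext i
    simp only [Matrix.mulVec_diagonal]
    rw [inv_mul_cancel_left₀ (hd i)]
  rw [Matrix.mul_inv_rev, Matrix.mul_inv_rev, hDinv, ← Matrix.mulVec_mulVec,
    ← Matrix.mulVec_mulVec, h1, dot_diag_left, h1]

/-- Theorem (decomposed GP regression has smaller variance): if each `K_{j,T}`
is positive definite and each `D_j` is invertible (`g_j(x_t) ≠ 0`), then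
`σ²_{T,decomp}(x) ≤ σ²_{T,entire}(x)`, i.e.
`∑ j, g_j(x)² (k_j(x,x) − k_{j,T}(x)ᵀ K_{j,T}⁻¹ k_{j,T}(x))
  ≤ k(x,x) − k_T(x)ᵀ K_T⁻¹ k_T(x)`. -/
theorem decomposed_gp_variance_le_entire {X : Type*} {T J : ℕ}
    (kj : Fin J → X → X → ℝ) (gj : Fin J → X → ℝ) (sj : Fin J → X → ℝ)
    (hsym : ∀ j x x', kj j x x' = kj j x' x)
    (xs : Fin T → X) (x : X)
    (hK : ∀ j, (Kmat kj sj xs j).PosDef)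
    (hD : ∀ j t, gj j (xs t) ≠ 0) :
    ∑ j, (gj j x) ^ 2 *
        (kj j x x - kvec kj xs j x ⬝ᵥ ((Kmat kj sj xs j)⁻¹ *ᵥ kvec kj xs j x)) ≤
    kComp kj gj x x -
      kvecComp kj gj xs x ⬝ᵥ ((KmatComp kj gj sj xs)⁻¹ *ᵥ kvecComp kj gj xs x) := by
  rcases Nat.eq_zero_or_pos J with hJ0 | hJpos
  · subst hJ0
    have h0 : kvecComp kj gj xs x = 0 := by
      funext t
      simp [kvecComp, kComp]
    simp [h0, kComp]
  · have hJ : J ≠ 0 := hJpos.ne'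
    set A : Fin J → Matrix (Fin T) (Fin T) ℝ :=
      fun j => Dmat gj xs j * Kmat kj sj xs j * Dmat gj xs j with hAdef
    have hApd : ∀ j, (A j).PosDef := fun j => DKD_posDef (hK j) (hD j)
    have hKc : KmatComp kj gj sj xs = ∑ j, A j := by
      ext s t
      rcases eq_or_ne s t with rfl | hst
      · simp only [KmatComp, kComp, sComp, Matrix.add_apply, Matrix.of_apply,
          Matrix.diagonal_apply_eq, Matrix.sum_apply, hAdef, Dmat, Kmat,
          Matrix.mul_diagonal, Matrix.diagonal_mul]
        rw [← Finset.sum_add_distrib]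
        exact Finset.sum_congr rfl fun j _ => by ring
      · simp only [KmatComp, kComp, sComp, Matrix.add_apply, Matrix.of_apply,
          Matrix.diagonal_apply_ne _ hst, Matrix.sum_apply, hAdef, Dmat, Kmat,
          Matrix.mul_diagonal, Matrix.diagonal_mul, add_zero]
    have hkc : kvecComp kj gj xs x = ∑ j, zvec kj gj xs j x := by
      funext t
      simp only [kvecComp, kComp, zvec, Dmat, kvec, Finset.sum_apply, Pi.smul_apply,
        Matrix.mulVec_diagonal, smul_eq_mul]
      exact Finset.sum_congr rfl fun j _ => by ring
    have hz : ∀ j, zvec kj gj xs j x ⬝ᵥ ((A j)⁻¹ *ᵥ zvec kj gj xs j x)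
        = (gj j x) ^ 2 *
          (kvec kj xs j x ⬝ᵥ ((Kmat kj sj xs j)⁻¹ *ᵥ kvec kj xs j x)) := by
      intro j
      simp only [zvec, hAdef, Dmat, Matrix.mulVec_smul, dotProduct_smul,
        smul_dotProduct, smul_eq_mul]
      rw [DKD_inv_dot (hD j)]
      ring
    have hsum := sum_quad_le hJ A (fun j => zvec kj gj xs j x) hApd
    have he : kComp kj gj x x = ∑ j, (gj j x) ^ 2 * kj j x x := by
      simp only [kComp]
      exact Finset.sum_congr rfl fun j _ => by ring
    have hL : ∑ j, (gj j x) ^ 2 *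
        (kj j x x - kvec kj xs j x ⬝ᵥ ((Kmat kj sj xs j)⁻¹ *ᵥ kvec kj xs j x))
        = ∑ j, (gj j x) ^ 2 * kj j x x
          - ∑ j, zvec kj gj xs j x ⬝ᵥ ((A j)⁻¹ *ᵥ zvec kj gj xs j x) := by
      rw [← Finset.sum_sub_distrib]
      exact Finset.sum_congr rfl fun j _ => by rw [hz j]; ring
    rw [hL, he, hKc, hkc]
    have := hsum
    linarith
end

section
/- (Lemma: per-step regret bound from valid confidence bounds.) Let 𝒳 be a finite nonempty set, let f, μ, σ : 𝒳 → ℝ and β ≥ 0. Suppose |f(x) − μ(x)| ≤ √β · σ(x) for all x ∈ 𝒳, and let x_t ∈ 𝒳 be a maximizer of x ↦ μ(x) + √β · σ(x) over 𝒳. Then for every x* ∈ 𝒳, the instantaneous regret satisfies f(x*) − f(x_t) ≤ 2√β · σ(x_t). -/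
open Real

/-- Per-step regret bound from valid confidence bounds: if
`|f(x) − μ(x)| ≤ √β σ(x)` for all `x` and `x_t` maximizes the UCB
`μ(x) + √β σ(x)`, then `f(x*) − f(x_t) ≤ 2 √β σ(x_t)` for every `x*`. -/
theorem ucb_per_step_regret {𝒳 : Type*} [Fintype 𝒳] [Nonempty 𝒳]
    (f μ σ : 𝒳 → ℝ) (β : ℝ) (hβ : 0 ≤ β)
    (hconf : ∀ x, |f x - μ x| ≤ Real.sqrt β * σ x)
    (xt : 𝒳) (hmax : ∀ x, μ x + Real.sqrt β * σ x ≤ μ xt + Real.sqrt β * σ xt) :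
    ∀ xstar : 𝒳, f xstar - f xt ≤ 2 * Real.sqrt β * σ xt := by
  intro xs
  have h1 := abs_le.mp (hconf xs)
  have h2 := abs_le.mp (hconf xt)
  have h3 := hmax xs
  linarith
end

section
/- (Deterministic core of the generalized confidence lemma.) Let g : ℝ^J → ℝ be differentiable with |∂g/∂u_j(u)| ≤ B_j for all u ∈ ℝ^J and all j, where B_j ≥ 0. Let β ≥ 0 and let f_j, μ_j ∈ ℝ and σ_j ≥ 0 for j = 1,…,J satisfy |f_j − μ_j| ≤ √β · σ_j for every j. Then |g(f_1,…,f_J) − g(μ_1,…,μ_J)| ≤ √β · √( J · ∑_{j=1}^J B_j² σ_j² ). -/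
open BigOperators Real

/-- Deterministic core of the generalized confidence lemma: if `g : ℝ^J → ℝ`
is differentiable with bounded partial derivatives `|∂g/∂u_j| ≤ B_j`, and
`|f_j − μ_j| ≤ √β σ_j` for every `j`, then
`|g(f) − g(μ)| ≤ √β √(J ∑ j, B_j² σ_j²)`. -/
theorem generalized_confidence_core {J : ℕ}
    (g : (Fin J → ℝ) → ℝ) (hg : Differentiable ℝ g)
    (B : Fin J → ℝ) (hB : ∀ j, 0 ≤ B j)
    (hbound : ∀ (u : Fin J → ℝ) (j : Fin J), |fderiv ℝ g u (Pi.single j 1)| ≤ B j)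
    (β : ℝ) (hβ : 0 ≤ β)
    (f μ σ : Fin J → ℝ) (hσ : ∀ j, 0 ≤ σ j)
    (hconf : ∀ j, |f j - μ j| ≤ Real.sqrt β * σ j) :
    |g f - g μ| ≤ Real.sqrt β * Real.sqrt ((J : ℝ) * ∑ j, (B j) ^ 2 * (σ j) ^ 2) := by
  -- directional derivative bound
  have hdir : ∀ u : Fin J → ℝ, |fderiv ℝ g u (f - μ)| ≤ ∑ j, B j * |f j - μ j| := by
    intro u
    have hv : (f - μ : Fin J → ℝ) = ∑ j, (f j - μ j) • (Pi.single j 1 : Fin J → ℝ) := by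
      ext k
      simp [Finset.sum_apply, Pi.single_apply]
    rw [hv, map_sum]
    refine (Finset.abs_sum_le_sum_abs _ _).trans ?_
    refine Finset.sum_le_sum fun j _ => ?_
    rw [map_smul, smul_eq_mul, abs_mul, mul_comm]
    exact mul_le_mul_of_nonneg_right (hbound u j) (abs_nonneg _)
  -- mean value inequality along the segment
  set φ : ℝ → ℝ := fun t => g (μ + t • (f - μ)) with hφ
  have hstep1 : |g f - g μ| ≤ ∑ j, B j * |f j - μ j| := by
    have hd : ∀ t : ℝ, HasDerivAt φ (fderiv ℝ g (μ + t • (f - μ)) (f - μ)) t := by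
      intro t
      have h1 : HasDerivAt (fun t : ℝ => μ + t • (f - μ)) (f - μ) t := by
        simpa using ((hasDerivAt_id t).smul_const (f - μ)).const_add μ
      exact (hg _).hasFDerivAt.comp_hasDerivAt t h1
    have := norm_image_sub_le_of_norm_deriv_le_segment_01'
      (f := φ) (f' := fun t => fderiv ℝ g (μ + t • (f - μ)) (f - μ))
      (fun x _ => (hd x).hasDerivWithinAt)
      (fun x _ => hdir _)
    simpa [hφ, Real.norm_eq_abs] using this
  -- bound by √β ∑ B σ
  have hstep2 : ∑ j, B j * |f j - μ j| ≤ Real.sqrt β * ∑ j, B j * σ j := by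
    rw [Finset.mul_sum]
    refine Finset.sum_le_sum fun j _ => ?_
    calc B j * |f j - μ j| ≤ B j * (Real.sqrt β * σ j) :=
          mul_le_mul_of_nonneg_left (hconf j) (hB j)
      _ = Real.sqrt β * (B j * σ j) := by ring
  -- Cauchy–Schwarz
  have hcs : ∑ j, B j * σ j ≤ Real.sqrt ((J : ℝ) * ∑ j, (B j) ^ 2 * (σ j) ^ 2) := by
    have hsq : (∑ j, B j * σ j) ^ 2 ≤ (J : ℝ) * ∑ j, (B j) ^ 2 * (σ j) ^ 2 := by
      have := sq_sum_le_card_mul_sum_sq (s := Finset.univ)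
        (f := fun j : Fin J => B j * σ j)
      simpa [mul_pow, Finset.card_univ] using this
    have h0 : (0 : ℝ) ≤ ∑ j, B j * σ j :=
      Finset.sum_nonneg fun j _ => mul_nonneg (hB j) (hσ j)
    calc ∑ j, B j * σ j = Real.sqrt ((∑ j, B j * σ j) ^ 2) := by
          rw [Real.sqrt_sq h0]
      _ ≤ _ := Real.sqrt_le_sqrt hsq
  calc |g f - g μ| ≤ ∑ j, B j * |f j - μ j| := hstep1
    _ ≤ Real.sqrt β * ∑ j, B j * σ j := hstep2
    _ ≤ Real.sqrt β * Real.sqrt ((J : ℝ) * ∑ j, (B j) ^ 2 * (σ j) ^ 2) :=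
        mul_le_mul_of_nonneg_left hcs (Real.sqrt_nonneg β)
end

section
/- (Deterministic regret chain in the proof of the D-GPUCB regret bound.) Let σ > 0 and set C₁ = 8 / log(1 + σ^{−2}). Let T ≥ 1, J ≥ 1, and for t = 1,…,T and j = 1,…,J let r_t ≥ 0, β_t > 0, w_{j,t} ∈ ℝ and s_{j,t} ∈ ℝ satisfy: (i) r_t² ≤ 4 β_t ∑_{j=1}^J w_{j,t}² s_{j,t}² for every t; (ii) 0 ≤ s_{j,t}² ≤ 1 for all j, t; (iii) |w_{j,t}| ≤ B_j for all j, t, with constants B_j ≥ 0; (iv) β_t ≤ β_T for every t ≤ T. Then the cumulative regret R_T = ∑_{t=1}^T r_t satisfies R_T² ≤ C₁ · T · β_T · ∑_{j=1}^J B_j² · ( (1/2) ∑_{t=1}^T log(1 + σ^{−2} s_{j,t}²) ). -/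
open BigOperators Real Finset

/-- Concavity: for `a > 0`, `0 ≤ x ≤ 1`, `x * log (1+a) ≤ log (1 + a*x)`. -/
lemma log_concave_aux {a x : ℝ} (ha : 0 < a) (hx0 : 0 ≤ x) (hx1 : x ≤ 1) :
    x * Real.log (1 + a) ≤ Real.log (1 + a * x) := by
  have h := strictConcaveOn_log_Ioi.concaveOn.2 (Set.mem_Ioi.mpr (zero_lt_one' ℝ))
    (Set.mem_Ioi.mpr (show (0:ℝ) < 1 + a by linarith))
    (show (0:ℝ) ≤ 1 - x by linarith) hx0 (by ring)
  simp only [smul_eq_mul] at h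
  have hc : (1 - x) * 1 + x * (1 + a) = 1 + a * x := by ring
  rw [hc] at h
  simpa using h

/-- Deterministic regret chain in the proof of the D-GPUCB regret bound:
under the per-round conditions (i)–(iv), the cumulative regret
`R_T = ∑ t, r_t` satisfies
`R_T² ≤ C₁ T β_T ∑ j, B_j² ((1/2) ∑ t, log(1 + σ⁻² s_{j,t}²))`
with `C₁ = 8 / log (1 + σ⁻²)`. -/
theorem dgpucb_regret_chain (σ : ℝ) (hσ : 0 < σ)
    (T J : ℕ) (hT : 1 ≤ T) (hJ : 1 ≤ J)
    (r : ℕ → ℝ) (β : ℕ → ℝ) (w s : ℕ → ℕ → ℝ) (B : ℕ → ℝ)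
    (hr : ∀ t ∈ Finset.Icc 1 T, 0 ≤ r t)
    (hβpos : ∀ t ∈ Finset.Icc 1 T, 0 < β t)
    (hB : ∀ j ∈ Finset.Icc 1 J, 0 ≤ B j)
    (h1 : ∀ t ∈ Finset.Icc 1 T,
      r t ^ 2 ≤ 4 * β t * ∑ j ∈ Finset.Icc 1 J, (w j t) ^ 2 * (s j t) ^ 2)
    (h2 : ∀ j ∈ Finset.Icc 1 J, ∀ t ∈ Finset.Icc 1 T, (s j t) ^ 2 ≤ 1)
    (h3 : ∀ j ∈ Finset.Icc 1 J, ∀ t ∈ Finset.Icc 1 T, |w j t| ≤ B j)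
    (h4 : ∀ t ∈ Finset.Icc 1 T, β t ≤ β T) :
    (∑ t ∈ Finset.Icc 1 T, r t) ^ 2 ≤
      (8 / Real.log (1 + σ⁻¹ ^ 2)) * (T : ℝ) * β T *
        ∑ j ∈ Finset.Icc 1 J, (B j) ^ 2 *
          ((1 / 2) * ∑ t ∈ Finset.Icc 1 T, Real.log (1 + σ⁻¹ ^ 2 * (s j t) ^ 2)) := by
  set a : ℝ := σ⁻¹ ^ 2 with ha
  have hapos : 0 < a := by positivity
  set L : ℝ := Real.log (1 + a) with hL
  have hLpos : 0 < L := Real.log_pos (by linarith)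
  have hβT : 0 < β T := hβpos T (by simp [hT])
  -- key pointwise bound
  have key : ∀ j ∈ Finset.Icc 1 J, ∀ t ∈ Finset.Icc 1 T,
      (w j t) ^ 2 * (s j t) ^ 2 ≤ (B j) ^ 2 * (Real.log (1 + a * (s j t) ^ 2) / L) := by
    intro j hj t ht
    have hs0 : (0 : ℝ) ≤ (s j t) ^ 2 := sq_nonneg _
    have hs1 := h2 j hj t ht
    have hsle : (s j t) ^ 2 ≤ Real.log (1 + a * (s j t) ^ 2) / L := by
      rw [le_div_iff₀ hLpos]
      exact log_concave_aux hapos hs0 hs1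
    have hw : (w j t) ^ 2 ≤ (B j) ^ 2 := by
      have := h3 j hj t ht
      calc (w j t) ^ 2 = |w j t| ^ 2 := (sq_abs _).symm
        _ ≤ (B j) ^ 2 := by
            exact pow_le_pow_left₀ (abs_nonneg _) this 2
    have hlog0 : 0 ≤ Real.log (1 + a * (s j t) ^ 2) / L := by
      apply div_nonneg _ hLpos.le
      apply Real.log_nonneg; nlinarith
    exact mul_le_mul hw hsle hs0 (sq_nonneg _)
  -- bound on ∑ r²
  have step2 : ∑ t ∈ Finset.Icc 1 T, (r t) ^ 2 ≤
      (4 * β T / L) * ∑ j ∈ Finset.Icc 1 J, (B j) ^ 2 *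
        ∑ t ∈ Finset.Icc 1 T, Real.log (1 + a * (s j t) ^ 2) := by
    have hstep : ∀ t ∈ Finset.Icc 1 T, (r t) ^ 2 ≤
        (4 * β T / L) * ∑ j ∈ Finset.Icc 1 J, (B j) ^ 2 * Real.log (1 + a * (s j t) ^ 2) := by
      intro t ht
      have h1t := h1 t ht
      have hsum : ∑ j ∈ Finset.Icc 1 J, (w j t) ^ 2 * (s j t) ^ 2 ≤
          ∑ j ∈ Finset.Icc 1 J, (B j) ^ 2 * (Real.log (1 + a * (s j t) ^ 2) / L) :=
        Finset.sum_le_sum fun j hj => key j hj t ht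
      have hsumnn : 0 ≤ ∑ j ∈ Finset.Icc 1 J, (w j t) ^ 2 * (s j t) ^ 2 :=
        Finset.sum_nonneg fun j _ => mul_nonneg (sq_nonneg _) (sq_nonneg _)
      have hβt := hβpos t ht
      have h4t := h4 t ht
      calc (r t) ^ 2 ≤ 4 * β t * ∑ j ∈ Finset.Icc 1 J, (w j t) ^ 2 * (s j t) ^ 2 := h1t
        _ ≤ 4 * β T * ∑ j ∈ Finset.Icc 1 J, (w j t) ^ 2 * (s j t) ^ 2 := by nlinarith
        _ ≤ 4 * β T * ∑ j ∈ Finset.Icc 1 J, (B j) ^ 2 * (Real.log (1 + a * (s j t) ^ 2) / L) :=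
            mul_le_mul_of_nonneg_left hsum (by linarith)
        _ = (4 * β T / L) * ∑ j ∈ Finset.Icc 1 J, (B j) ^ 2 * Real.log (1 + a * (s j t) ^ 2) := by
            rw [Finset.mul_sum, Finset.mul_sum]; apply Finset.sum_congr rfl
            intro j _; field_simp
    calc ∑ t ∈ Finset.Icc 1 T, (r t) ^ 2
        ≤ ∑ t ∈ Finset.Icc 1 T, (4 * β T / L) *
            ∑ j ∈ Finset.Icc 1 J, (B j) ^ 2 * Real.log (1 + a * (s j t) ^ 2) :=
          Finset.sum_le_sum hstep
      _ = (4 * β T / L) * ∑ j ∈ Finset.Icc 1 J, (B j) ^ 2 *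
            ∑ t ∈ Finset.Icc 1 T, Real.log (1 + a * (s j t) ^ 2) := by
          rw [← Finset.mul_sum, Finset.sum_comm]
          congr 1
          apply Finset.sum_congr rfl
          intro j _
          rw [Finset.mul_sum]
  -- Cauchy–Schwarz
  have hCS : (∑ t ∈ Finset.Icc 1 T, r t) ^ 2 ≤
      (T : ℝ) * ∑ t ∈ Finset.Icc 1 T, (r t) ^ 2 := by
    have := sq_sum_le_card_mul_sum_sq (s := Finset.Icc 1 T) (f := r)
    simpa [Nat.card_Icc] using this
  calc (∑ t ∈ Finset.Icc 1 T, r t) ^ 2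
      ≤ (T : ℝ) * ∑ t ∈ Finset.Icc 1 T, (r t) ^ 2 := hCS
    _ ≤ (T : ℝ) * ((4 * β T / L) * ∑ j ∈ Finset.Icc 1 J, (B j) ^ 2 *
          ∑ t ∈ Finset.Icc 1 T, Real.log (1 + a * (s j t) ^ 2)) := by
        apply mul_le_mul_of_nonneg_left step2 (by positivity)
    _ = (8 / L) * (T : ℝ) * β T *
        ∑ j ∈ Finset.Icc 1 J, (B j) ^ 2 *
          ((1 / 2) * ∑ t ∈ Finset.Icc 1 T, Real.log (1 + a * (s j t) ^ 2)) := by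
        rw [Finset.mul_sum, Finset.mul_sum, Finset.mul_sum]
        apply Finset.sum_congr rfl
        intro j _
        field_simp
        ring
end
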